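/- Consider the linear multi-agent system ẋ = (I_L ⊗ A − δ L ⊗ BK)x on ℝ^{nL}, where L is the Laplacian of a nonnegative digraph partitioned into clusters C_1,...,C_N satisfying the inter-cluster common influence condition. The stacked intra-cluster error vector e(t), with components e_l = x_l − x_{ρ_i+1} for l ∈ C_i \ {ρ_i+1}, satisfies the closed linear system ė = (I_{L−N} ⊗ A − δ L̂ ⊗ BK)e, where L̂ is the reduced matrix defined by L̂_{ij} = L̃_{ij} − 1·γ_{ij}^T. -/

import Mathlib

open Matrix

/-- Under the inter-cluster common influence condition, the stacked
intra-cluster error vector `e`, with `e ⟨i,a⟩ = x ⟨i,a.succ⟩ − x ⟨i,0⟩`, satisfies the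
closed linear system `ė = (I ⊗ A − δ L̂ ⊗ BK) e`, where cluster `i` consists of the
nodes `⟨i, b⟩`, `b : Fin (l i + 1)`, and `L̂` is the reduced matrix. -/
theorem stmt6 (N n nu : ℕ) (l : Fin N → ℕ)
    (ℒ : Matrix ((i : Fin N) × Fin (l i + 1)) ((i : Fin N) × Fin (l i + 1)) ℝ)
    (β : Fin N → Fin N → ℝ)
    (hoff : ∀ v k, v ≠ k → ℒ v k ≤ 0)
    (hrow : ∀ v, ∑ k, ℒ v k = 0)
    (hblock : ∀ (i : Fin N) (a : Fin (l i + 1)) (j : Fin N),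
      ∑ b : Fin (l j + 1), ℒ ⟨i, a⟩ ⟨j, b⟩ = β i j)
    (Lhat : Matrix ((i : Fin N) × Fin (l i)) ((i : Fin N) × Fin (l i)) ℝ)
    (hLhat : ∀ (i : Fin N) (a : Fin (l i)) (j : Fin N) (b : Fin (l j)),
      Lhat ⟨i, a⟩ ⟨j, b⟩ = ℒ ⟨i, a.succ⟩ ⟨j, b.succ⟩ - ℒ ⟨i, 0⟩ ⟨j, b.succ⟩)
    (A : Matrix (Fin n) (Fin n) ℝ) (B : Matrix (Fin n) (Fin nu) ℝ)
    (K : Matrix (Fin nu) (Fin n) ℝ) (δ : ℝ)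
    (x : ℝ → ((i : Fin N) × Fin (l i + 1)) → (Fin n → ℝ))
    (hx : ∀ t v, HasDerivAt (fun s => x s v)
        (A.mulVec (x t v) - δ • (B * K).mulVec (∑ k, ℒ v k • x t k)) t)
    (e : ℝ → ((i : Fin N) × Fin (l i)) → (Fin n → ℝ))
    (he : ∀ (t : ℝ) (i : Fin N) (a : Fin (l i)),
        e t ⟨i, a⟩ = x t ⟨i, a.succ⟩ - x t ⟨i, 0⟩) :
    ∀ t v, HasDerivAt (fun s => e s v)
        (A.mulVec (e t v) - δ • (B * K).mulVec (∑ k, Lhat v k • e t k)) t := by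

  intro t v
  obtain ⟨i, a⟩ := v
  have hfun : (fun s => e s ⟨i, a⟩) = fun s => x s ⟨i, a.succ⟩ - x s ⟨i, 0⟩ :=
    funext fun s => he s i a
  rw [hfun]
  have hd := (hx t ⟨i, a.succ⟩).sub (hx t ⟨i, 0⟩)
  refine hd.congr_deriv (Eq.symm ?_)
  have key : ∑ k, Lhat ⟨i, a⟩ k • e t k
      = (∑ k, ℒ ⟨i, a.succ⟩ k • x t k) - ∑ k, ℒ ⟨i, 0⟩ k • x t k := by
    rw [← Finset.sum_sub_distrib]
    rw [← Finset.univ_sigma_univ, Finset.sum_sigma]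
    conv_rhs => rw [← Finset.univ_sigma_univ, Finset.sum_sigma]
    refine Finset.sum_congr rfl fun j _ => ?_
    have hc : ∑ b : Fin (l j + 1), (ℒ ⟨i, a.succ⟩ ⟨j, b⟩ - ℒ ⟨i, 0⟩ ⟨j, b⟩) = 0 := by
      rw [Finset.sum_sub_distrib, hblock, hblock, sub_self]
    have h0 : (ℒ ⟨i, a.succ⟩ ⟨j, 0⟩ - ℒ ⟨i, 0⟩ ⟨j, 0⟩)
        = - ∑ b : Fin (l j), (ℒ ⟨i, a.succ⟩ ⟨j, b.succ⟩ - ℒ ⟨i, 0⟩ ⟨j, b.succ⟩) := by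
      have := hc
      rw [Fin.sum_univ_succ] at this
      linarith
    calc ∑ b : Fin (l j), Lhat ⟨i, a⟩ ⟨j, b⟩ • e t ⟨j, b⟩
        = ∑ b : Fin (l j), (ℒ ⟨i, a.succ⟩ ⟨j, b.succ⟩ - ℒ ⟨i, 0⟩ ⟨j, b.succ⟩)
            • (x t ⟨j, b.succ⟩ - x t ⟨j, 0⟩) := by
          refine Finset.sum_congr rfl fun b _ => ?_
          rw [hLhat, he]
      _ = ∑ b : Fin (l j + 1), (ℒ ⟨i, a.succ⟩ ⟨j, b⟩ • x t ⟨j, b⟩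
            - ℒ ⟨i, 0⟩ ⟨j, b⟩ • x t ⟨j, b⟩) := by
          rw [Fin.sum_univ_succ]
          simp only [← sub_smul, smul_sub]
          rw [Finset.sum_sub_distrib, ← Finset.sum_smul, h0, neg_smul]
          abel
  rw [he, key, mulVec_sub, mulVec_sub, smul_sub]
  abel
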